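/- Let K be a self-adjoint operator on a finite-dimensional Hilbert space, let Γ be a unit vector with KΓ = Γ, and suppose K maps the orthogonal complement of Γ into itself with ‖Kw‖² ≤ Δ·‖w‖² there. If φ is a unit vector with |⟨Γ, φ⟩| ≥ μ > 0, then the normalized vector Kφ/‖Kφ‖ satisfies |⟨Γ, Kφ/‖Kφ‖⟩|² ≥ μ²/(μ² + Δ(1 − μ²)). -/

import Mathlib

open scoped InnerProductSpace

/-- AGSP overlap-improvement: applying `K` to a state with overlap `μ` with the fixed
ground state `Γ` yields a normalized state with squared overlap at least
`μ²/(μ² + Δ(1 − μ²))`. -/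
theorem agsp_overlap_improvement
    {E : Type*} [NormedAddCommGroup E] [InnerProductSpace ℂ E] [FiniteDimensional ℂ E]
    (K : E →ₗ[ℂ] E) (Γ : E) (hΓ : ‖Γ‖ = 1) (hfix : K Γ = Γ)
    (Δ : ℝ) (hΔ : 0 ≤ Δ)
    (hinv : ∀ w : E, ⟪Γ, w⟫_ℂ = 0 → ⟪Γ, K w⟫_ℂ = 0 ∧ ‖K w‖ ^ 2 ≤ Δ * ‖w‖ ^ 2)
    (φ : E) (hφ : ‖φ‖ = 1) (μ : ℝ) (hμ : 0 < μ) (hoverlap : μ ≤ ‖⟪Γ, φ⟫_ℂ‖) :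
    μ ^ 2 / (μ ^ 2 + Δ * (1 - μ ^ 2)) ≤
      ‖⟪Γ, ((‖K φ‖ : ℂ)⁻¹ • K φ)⟫_ℂ‖ ^ 2 := by
  set c : ℂ := ⟪Γ, φ⟫_ℂ with hc
  set w : E := φ - c • Γ with hw
  have hΓΓ : ⟪Γ, Γ⟫_ℂ = 1 := by
    rw [inner_self_eq_norm_sq_to_K, hΓ]; norm_num
  have hwperp : ⟪Γ, w⟫_ℂ = 0 := by
    simp [hw, inner_sub_right, inner_smul_right, hΓΓ, hΓ, hc]
  obtain ⟨hKw0, hKwle⟩ := hinv w hwperp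
  have hφdecomp : φ = c • Γ + w := by simp [hw]
  have hKφ : K φ = c • Γ + K w := by
    rw [hφdecomp, map_add, map_smul, hfix]
  have hinner : ⟪Γ, K φ⟫_ℂ = c := by
    rw [hKφ, inner_add_right, inner_smul_right, hΓΓ, hKw0]; ring
  have habs : ‖c‖ ≤ 1 := by
    calc ‖c‖ ≤ ‖Γ‖ * ‖φ‖ := norm_inner_le_norm _ _
    _ = 1 := by rw [hΓ, hφ]; ring
  have hμc : μ ≤ ‖c‖ := hoverlap
  -- norm decompositions
  have pyth : ∀ x y : E, ⟪x, y⟫_ℂ = 0 → ‖x + y‖ ^ 2 = ‖x‖ ^ 2 + ‖y‖ ^ 2 := by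
    intro x y h
    have := norm_add_sq_eq_norm_sq_add_norm_sq_of_inner_eq_zero x y h
    rw [pow_two, pow_two, pow_two]; exact this
  have hwnorm : ‖φ‖ ^ 2 = ‖c • Γ‖ ^ 2 + ‖w‖ ^ 2 := by
    rw [hφdecomp]
    exact pyth _ _ (by rw [inner_smul_left, hwperp, mul_zero])
  have hcΓ : ‖c • Γ‖ = ‖c‖ := by rw [norm_smul, hΓ, mul_one]
  have hw2 : ‖w‖ ^ 2 = 1 - ‖c‖ ^ 2 := by
    rw [hφ] at hwnorm; rw [hcΓ] at hwnorm; linarith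
  have hKφnorm : ‖K φ‖ ^ 2 = ‖c‖ ^ 2 + ‖K w‖ ^ 2 := by
    rw [hKφ, pyth _ _ (by rw [inner_smul_left, hKw0, mul_zero]), hcΓ]
  have hμ2 : 0 < μ ^ 2 := by positivity
  have hc2 : μ ^ 2 ≤ ‖c‖ ^ 2 := by nlinarith
  have hKφpos : 0 < ‖K φ‖ := by
    nlinarith [norm_nonneg (K φ)]
  have hKφub : ‖K φ‖ ^ 2 ≤ ‖c‖ ^ 2 + Δ * (1 - ‖c‖ ^ 2) := by
    rw [hKφnorm]; rw [hw2] at hKwle; linarith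
  -- compute the goal's inner product
  have hgoal : ‖⟪Γ, ((‖K φ‖ : ℂ)⁻¹ • K φ)⟫_ℂ‖ ^ 2 = ‖c‖ ^ 2 / ‖K φ‖ ^ 2 := by
    rw [inner_smul_right, hinner, norm_mul, mul_pow,
      norm_inv, Complex.norm_real, Real.norm_eq_abs, abs_of_pos hKφpos]
    field_simp
  rw [hgoal]
  have hden : 0 < μ ^ 2 + Δ * (1 - μ ^ 2) := by nlinarith
  rw [div_le_div_iff₀ hden (by positivity)]
  nlinarith [mul_nonneg hΔ (sub_nonneg.2 hc2), sq_nonneg μ]
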